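/- arXiv:2011.01121 — 3 statements merged into one kernel-verified Lean document; each statement's English description precedes it below -/
import Mathlib

section
/- Let P₊, P₋ be n×n Hermitian positive definite matrices, R₊, R₋ invertible n×n matrices with R₊*P₊R₊ = I and R₋*P₋R₋ = I, and D₊, D₋ real diagonal n×n matrices with all diagonal entries strictly negative. Then the matrix D₊ + R₊*P₋R₋D₋R₋*P₋R₊ is Hermitian and negative definite; in particular the matrix R₋*P₊R₊D₊ + D₋R₋*P₋R₊ is invertible. -/
open Matrix
open scoped ComplexOrder

/-- For positive definite `P±`, `R±` with `R±ᴴ P± R± = I`, and real diagonal `D±`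
with strictly negative entries, `D₊ + R₊ᴴ P₋ R₋ D₋ R₋ᴴ P₋ R₊` is Hermitian negative
definite; in particular `R₋ᴴ P₊ R₊ D₊ + D₋ R₋ᴴ P₋ R₊` is invertible. -/
theorem stmt5 (n : ℕ) (Pp Pm Rp Rm : Matrix (Fin n) (Fin n) ℂ)
    (hPp : Pp.PosDef) (hPm : Pm.PosDef)
    (hRp : IsUnit Rp) (hRm : IsUnit Rm)
    (hRpP : Rpᴴ * Pp * Rp = 1) (hRmP : Rmᴴ * Pm * Rm = 1)
    (dp dm : Fin n → ℝ) (hdp : ∀ i, dp i < 0) (hdm : ∀ i, dm i < 0)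
    (Dp Dm : Matrix (Fin n) (Fin n) ℂ)
    (hDp : Dp = Matrix.diagonal fun i => (dp i : ℂ))
    (hDm : Dm = Matrix.diagonal fun i => (dm i : ℂ)) :
    (Dp + Rpᴴ * Pm * Rm * Dm * Rmᴴ * Pm * Rp).IsHermitian ∧
    (-(Dp + Rpᴴ * Pm * Rm * Dm * Rmᴴ * Pm * Rp)).PosDef ∧
    IsUnit (Rmᴴ * Pp * Rp * Dp + Dm * Rmᴴ * Pm * Rp) := by
  set B := Rpᴴ * Pm * Rm with hB
  have hBH : Bᴴ = Rmᴴ * Pm * Rp := by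
    simp [hB, Matrix.mul_assoc, hPm.isHermitian.eq]
  -- negative definiteness
  have hnegDp : (-Dp).PosDef := by
    rw [hDp]
    have : -(Matrix.diagonal fun i => (dp i : ℂ)) =
        Matrix.diagonal fun i => ((-dp i : ℝ) : ℂ) := by
      simp [Matrix.diagonal_neg]
    rw [this]
    exact Matrix.posDef_diagonal_iff.mpr fun i =>
      Complex.zero_lt_real.mpr (neg_pos.mpr (hdp i))
  have hnegDm : (-Dm).PosSemidef := by
    rw [hDm]
    have : -(Matrix.diagonal fun i => (dm i : ℂ)) =
        Matrix.diagonal fun i => ((-dm i : ℝ) : ℂ) := by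
      simp [Matrix.diagonal_neg]
    rw [this]
    exact Matrix.posSemidef_diagonal_iff.mpr fun i =>
      (Complex.zero_le_real.mpr (neg_pos.mpr (hdm i)).le)
  have hsemi : (B * (-Dm) * Bᴴ).PosSemidef :=
    hnegDm.mul_mul_conjTranspose_same B
  have hrw : -(Dp + Rpᴴ * Pm * Rm * Dm * Rmᴴ * Pm * Rp) =
      (-Dp) + B * (-Dm) * Bᴴ := by
    rw [hBH, hB]
    noncomm_ring
  have hposdef : (-(Dp + Rpᴴ * Pm * Rm * Dm * Rmᴴ * Pm * Rp)).PosDef := by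
    rw [hrw]; exact hnegDp.add_posSemidef hsemi
  have hherm : (Dp + Rpᴴ * Pm * Rm * Dm * Rmᴴ * Pm * Rp).IsHermitian := by
    have := hposdef.isHermitian
    simpa using this.neg
  refine ⟨hherm, hposdef, ?_⟩
  -- invertibility
  have hRpRp : Rp * Rpᴴ = Pp⁻¹ := by
    have h1 : Rp⁻¹ = Rpᴴ * Pp := by
      have : Rpᴴ * Pp * Rp = 1 := hRpP
      calc Rp⁻¹ = 1 * Rp⁻¹ := (one_mul _).symm
        _ = Rpᴴ * Pp * Rp * Rp⁻¹ := by rw [this]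
        _ = Rpᴴ * Pp := by
            rw [Matrix.mul_assoc, Matrix.mul_nonsing_inv _ ((Matrix.isUnit_iff_isUnit_det _).mp hRp), Matrix.mul_one]
    have h2 : Rp * (Rpᴴ * Pp) = 1 := by
      rw [← h1, Matrix.mul_nonsing_inv _ ((Matrix.isUnit_iff_isUnit_det _).mp hRp)]
    calc Rp * Rpᴴ = Rp * Rpᴴ * (Pp * Pp⁻¹) := by
          rw [Matrix.mul_nonsing_inv _ ((Matrix.isUnit_iff_isUnit_det _).mp hPp.isUnit), Matrix.mul_one]
      _ = (Rp * (Rpᴴ * Pp)) * Pp⁻¹ := by noncomm_ring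
      _ = Pp⁻¹ := by rw [h2, one_mul]
  set M := Rmᴴ * Pp * Rp with hM
  have hMB : M * B = 1 := by
    calc M * B = Rmᴴ * (Pp * (Rp * Rpᴴ) * Pm) * Rm := by
          rw [hM, hB]; noncomm_ring
      _ = Rmᴴ * Pm * Rm := by
          rw [hRpRp, Matrix.mul_nonsing_inv _ ((Matrix.isUnit_iff_isUnit_det _).mp hPp.isUnit), Matrix.one_mul]
      _ = 1 := hRmP
  have hMunit : IsUnit M := by
    rw [hM]
    have hRmH : IsUnit Rmᴴ := (Matrix.isUnit_iff_isUnit_det _).mpr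
      (by rw [Matrix.det_conjTranspose]; exact ((Matrix.isUnit_iff_isUnit_det _).mp hRm).star)
    exact (hRmH.mul hPp.isUnit).mul hRp
  have hAunit : IsUnit (Dp + Rpᴴ * Pm * Rm * Dm * Rmᴴ * Pm * Rp) := by
    have := hposdef.isUnit
    simpa using this.neg
  have hfact : Rmᴴ * Pp * Rp * Dp + Dm * Rmᴴ * Pm * Rp =
      M * (Dp + Rpᴴ * Pm * Rm * Dm * Rmᴴ * Pm * Rp) := by
    have : M * (Rpᴴ * Pm * Rm * Dm * Rmᴴ * Pm * Rp) =
        (M * B) * (Dm * (Rmᴴ * Pm * Rp)) := by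
      rw [hB]; noncomm_ring
    rw [Matrix.mul_add, this, hMB, Matrix.one_mul, hM]
    noncomm_ring
  rw [hfact]
  exact hMunit.mul hAunit
end

section
/- Let D be an n×n diagonal complex matrix with D² purely imaginary entries (i.e., D = ζΛ with ζ = −(1+i)/√2 and Λ real diagonal positive), and let R be an n×n matrix with R*R = I. Then the 4n×2n matrix X₋ with block rows (R R; RD² R(D*)²; RD³ R(D*)³; RD RD*) satisfies X₋*JX₋ = 0, where J is the standard 4n×4n symplectic matrix [[0, −I₂ₙ],[I₂ₙ, 0]]; i.e., X₋ is the frame of a Lagrangian subspace of ℂ^{4n}. -/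
open Matrix

/-- With `D = ζΛ`, `ζ = −(1+i)/√2`, `Λ` real diagonal positive (so `D²` is purely
imaginary), and `RᴴR = I`, the `4n × 2n` matrix with block rows
`(R R; RD² R(Dᴴ)²; RD³ R(Dᴴ)³; RD RDᴴ)` satisfies `X₋ᴴ J X₋ = 0`, i.e. it is the
frame of a Lagrangian subspace of `ℂ^{4n}`. -/
theorem stmt13 (n : ℕ) (R : Matrix (Fin n) (Fin n) ℂ) (hR : Rᴴ * R = 1)
    (l : Fin n → ℝ) (hl : ∀ i, 0 < l i)
    (ζ : ℂ) (hζ : ζ = -((1 + Complex.I) / Real.sqrt 2))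
    (D : Matrix (Fin n) (Fin n) ℂ)
    (hD : D = ζ • Matrix.diagonal fun i => (l i : ℂ))
    (J : Matrix ((Fin n ⊕ Fin n) ⊕ (Fin n ⊕ Fin n)) ((Fin n ⊕ Fin n) ⊕ (Fin n ⊕ Fin n)) ℂ)
    (hJ : J = Matrix.fromBlocks 0 (-1) 1 0)
    (Xm : Matrix ((Fin n ⊕ Fin n) ⊕ (Fin n ⊕ Fin n)) (Fin n ⊕ Fin n) ℂ)
    (hXm : Xm = Matrix.fromRows
      (Matrix.fromRows (Matrix.fromCols R R)
        (Matrix.fromCols (R * D ^ 2) (R * (Dᴴ) ^ 2)))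
      (Matrix.fromRows (Matrix.fromCols (R * D ^ 3) (R * (Dᴴ) ^ 3))
        (Matrix.fromCols (R * D) (R * Dᴴ)))) :
    Xmᴴ * J * Xm = 0 := by
  -- scalar facts
  have hζ2 : ζ * ζ = Complex.I := by
    have h2 : (Real.sqrt 2 : ℂ) * (Real.sqrt 2 : ℂ) = 2 := by
      rw [← Complex.ofReal_mul, Real.mul_self_sqrt (by norm_num)]
      norm_num
    have hne : (Real.sqrt 2 : ℂ) ≠ 0 := by
      intro h
      rw [h, mul_zero] at h2
      norm_num at h2
    rw [hζ]
    field_simp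
    rw [sq (Real.sqrt 2 : ℂ), h2]
    linear_combination Complex.I_sq
  have hζc2 : (starRingEnd ℂ) ζ * (starRingEnd ℂ) ζ = -Complex.I := by
    rw [← RingHom.map_mul, hζ2, Complex.conj_I]
  -- diagonal facts
  set c : ℂ := (starRingEnd ℂ) ζ with hc
  set Λ : Matrix (Fin n) (Fin n) ℂ := Matrix.diagonal fun i => (l i : ℂ) with hΛ
  have hΛH : Λᴴ = Λ := by
    have hfun : (star fun i => (l i : ℂ)) = fun i => (l i : ℂ) :=
      funext fun i => Complex.conj_ofReal (l i)
    rw [hΛ, Matrix.diagonal_conjTranspose, hfun]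
  have hDH : Dᴴ = c • Λ := by
    rw [hD, Matrix.conjTranspose_smul, hΛH, hc]
    rfl
  -- R-cancellation helpers
  have hc0 : ∀ A B : Matrix (Fin n) (Fin n) ℂ, (R * A)ᴴ * (R * B) = Aᴴ * B := by
    intro A B
    rw [Matrix.conjTranspose_mul, Matrix.mul_assoc, ← Matrix.mul_assoc Rᴴ, hR, Matrix.one_mul]
  have hc1 : ∀ B : Matrix (Fin n) (Fin n) ℂ, Rᴴ * (R * B) = B := by
    intro B
    rw [← Matrix.mul_assoc, hR, Matrix.one_mul]
  have hc2 : ∀ A : Matrix (Fin n) (Fin n) ℂ, (R * A)ᴴ * R = Aᴴ := by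
    intro A
    rw [Matrix.conjTranspose_mul, Matrix.mul_assoc, hR, Matrix.mul_one]
  -- block decomposition
  set E := Matrix.fromBlocks R R (R * D ^ 2) (R * Dᴴ ^ 2) with hE
  set F := Matrix.fromBlocks (R * D ^ 3) (R * Dᴴ ^ 3) (R * D) (R * Dᴴ) with hF
  have hXm' : Xm = Matrix.fromRows E F := by
    rw [hXm, hE, hF, Matrix.fromRows_fromCols_eq_fromBlocks,
      Matrix.fromRows_fromCols_eq_fromBlocks]
  rw [hXm', hJ, Matrix.conjTranspose_fromRows_eq_fromCols_conjTranspose,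
    Matrix.fromCols_mul_fromBlocks, Matrix.fromCols_mul_fromRows]
  have key : Fᴴ * E = Eᴴ * F := by
    rw [hE, hF, Matrix.fromBlocks_conjTranspose, Matrix.fromBlocks_conjTranspose,
      Matrix.fromBlocks_multiply, Matrix.fromBlocks_multiply]
    have hstar : star ζ = c := rfl
    simp only [hc0, hc1, hc2, Matrix.conjTranspose_pow, Matrix.conjTranspose_conjTranspose,
      hD, hDH, smul_pow, Matrix.conjTranspose_smul, hΛH, hstar, smul_mul_assoc,
      mul_smul_comm, smul_smul]
    have hcs : star c = ζ := star_star ζ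
    simp only [← pow_succ, ← pow_succ', star_pow, hstar, hcs]
    norm_num
    refine ⟨?_, ?_⟩
    · rw [← add_smul, ← add_smul]
      congr 1
      linear_combination (c - ζ) * hζ2 + (c - ζ) * hζc2
    · rw [← add_smul, ← add_smul]
      congr 1
      linear_combination (ζ - c) * hζc2 + (ζ - c) * hζ2
  simp [key]
end

section
/- With D = ζΛ, ζ = −(1+i)/√2, Λ real diagonal with strictly positive entries, and R unitary (R*R = I), the 4n×2n frames X₋ = (R R; RD² R(D*)²; RD³ R(D*)³; RD RD*) and X̃₊ = (R R; RD² R(D*)²; −RD³ −R(D*)³; −RD −RD*) satisfy X₋*JX̃₊ = [[0, 4(D*)³],[4D³, 0]], which is invertible; hence the corresponding Lagrangian subspaces intersect trivially. -/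
open Matrix



lemma stmt14_auxJ {n : ℕ} (A B P Q : Matrix (Fin n ⊕ Fin n) (Fin n ⊕ Fin n) ℂ) :
    (Matrix.fromRows A B)ᴴ * (Matrix.fromBlocks 0 (-1) 1 0 :
      Matrix ((Fin n ⊕ Fin n) ⊕ (Fin n ⊕ Fin n)) ((Fin n ⊕ Fin n) ⊕ (Fin n ⊕ Fin n)) ℂ) * Matrix.fromRows P Q
      = Bᴴ * P - Aᴴ * Q := by
  rw [Matrix.conjTranspose_fromRows_eq_fromCols_conjTranspose, Matrix.mul_assoc,
    Matrix.fromBlocks_mul_fromRows, Matrix.fromCols_mul_fromRows]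
  simp [Matrix.mul_neg, sub_eq_add_neg]
  abel

lemma stmt14_auxC {n : ℕ} (R : Matrix (Fin n) (Fin n) ℂ) (hR : Rᴴ * R = 1)
    (U V P Q : Matrix (Fin n) (Fin n) ℂ) :
    (Matrix.fromCols (R * U) (R * V))ᴴ * Matrix.fromCols (R * P) (R * Q) =
      Matrix.fromBlocks (Uᴴ * P) (Uᴴ * Q) (Vᴴ * P) (Vᴴ * Q) := by
  have key : ∀ X Y : Matrix (Fin n) (Fin n) ℂ, (R * X)ᴴ * (R * Y) = Xᴴ * Y := by
    intro X Y
    rw [Matrix.conjTranspose_mul, Matrix.mul_assoc, ← Matrix.mul_assoc Rᴴ, hR,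
      Matrix.one_mul]
  rw [Matrix.conjTranspose_fromCols_eq_fromRows_conjTranspose,
    Matrix.fromRows_mul_fromCols, key, key, key, key]

/-- With `D = ζΛ`, `ζ = −(1+i)/√2`, `Λ` real diagonal positive, and `RᴴR = I`, the
frames `X₋` and `X̃₊` of the asymptotic Lagrangian subspaces satisfy
`X₋ᴴ J X̃₊ = [[0, 4(Dᴴ)³],[4D³, 0]]`, which is invertible; hence the corresponding
Lagrangian subspaces intersect trivially. -/
theorem stmt14 (n : ℕ) (R : Matrix (Fin n) (Fin n) ℂ) (hR : Rᴴ * R = 1)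
    (l : Fin n → ℝ) (hl : ∀ i, 0 < l i)
    (ζ : ℂ) (hζ : ζ = -((1 + Complex.I) / Real.sqrt 2))
    (D : Matrix (Fin n) (Fin n) ℂ)
    (hD : D = ζ • Matrix.diagonal fun i => (l i : ℂ))
    (J : Matrix ((Fin n ⊕ Fin n) ⊕ (Fin n ⊕ Fin n)) ((Fin n ⊕ Fin n) ⊕ (Fin n ⊕ Fin n)) ℂ)
    (hJ : J = Matrix.fromBlocks 0 (-1) 1 0)
    (Xm Xp : Matrix ((Fin n ⊕ Fin n) ⊕ (Fin n ⊕ Fin n)) (Fin n ⊕ Fin n) ℂ)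
    (hXm : Xm = Matrix.fromRows
      (Matrix.fromRows (Matrix.fromCols R R)
        (Matrix.fromCols (R * D ^ 2) (R * (Dᴴ) ^ 2)))
      (Matrix.fromRows (Matrix.fromCols (R * D ^ 3) (R * (Dᴴ) ^ 3))
        (Matrix.fromCols (R * D) (R * Dᴴ))))
    (hXp : Xp = Matrix.fromRows
      (Matrix.fromRows (Matrix.fromCols R R)
        (Matrix.fromCols (R * D ^ 2) (R * (Dᴴ) ^ 2)))
      (Matrix.fromRows (Matrix.fromCols (-(R * D ^ 3)) (-(R * (Dᴴ) ^ 3)))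
        (Matrix.fromCols (-(R * D)) (-(R * Dᴴ))))) :
    Xmᴴ * J * Xp = Matrix.fromBlocks 0 ((4 : ℂ) • (Dᴴ) ^ 3) ((4 : ℂ) • D ^ 3) 0 ∧
    IsUnit (Xmᴴ * J * Xp) ∧
    LinearMap.range Xm.mulVecLin ⊓ LinearMap.range Xp.mulVecLin = ⊥ := by
  -- scalar facts
  have hz2 : ζ ^ 2 = Complex.I := by
    have h2 : ((Real.sqrt 2 : ℝ) : ℂ) ^ 2 = 2 := by
      norm_cast
      rw [Real.sq_sqrt]; norm_num
    rw [hζ, neg_pow, div_pow, h2]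
    ring_nf
    simp [Complex.I_sq]
  have hsz2 : (starRingEnd ℂ ζ) ^ 2 = -Complex.I := by
    rw [← map_pow, hz2, Complex.conj_I]
  set Λ : Matrix (Fin n) (Fin n) ℂ := Matrix.diagonal fun i => (l i : ℂ) with hΛ
  have hDH : Dᴴ = (starRingEnd ℂ ζ) • Λ := by
    have hstar : (star fun i : Fin n => ((l i : ℂ))) = fun i : Fin n => ((l i : ℂ)) := by
      funext i
      simp [Pi.star_apply, Complex.star_def, Complex.conj_ofReal]
    rw [hD]
    simp only [Matrix.conjTranspose_smul, Matrix.diagonal_conjTranspose, hΛ, hstar]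
    rfl
  have hD3 : D ^ 3 = (Complex.I * ζ) • Λ ^ 3 := by
    rw [hD, smul_pow, pow_succ, hz2, pow_succ, pow_succ]
  have hDH3 : Dᴴ ^ 3 = (-Complex.I * starRingEnd ℂ ζ) • Λ ^ 3 := by
    rw [hDH, smul_pow, pow_succ, hsz2, pow_succ, pow_succ]
  have hD2 : D ^ 2 = Complex.I • Λ ^ 2 := by rw [hD, smul_pow, hz2]
  have hDH2 : Dᴴ ^ 2 = (-Complex.I) • Λ ^ 2 := by rw [hDH, smul_pow, hsz2]
  have hm12 : Λ * Λ ^ 2 = Λ ^ 3 := (pow_succ' Λ 2).symm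
  have hm21 : Λ ^ 2 * Λ = Λ ^ 3 := (pow_succ Λ 2).symm
  -- the eight products
  have q1 : Dᴴ * D ^ 2 = (starRingEnd ℂ ζ * Complex.I) • Λ ^ 3 := by
    rw [hD2, hDH, smul_mul_smul_comm, hm12]
  have q2 : Dᴴ * Dᴴ ^ 2 = Dᴴ ^ 3 := (pow_succ' Dᴴ 2).symm
  have q3 : D * D ^ 2 = D ^ 3 := (pow_succ' D 2).symm
  have q4 : D * Dᴴ ^ 2 = (ζ * -Complex.I) • Λ ^ 3 := by
    rw [hDH2, hD, smul_mul_smul_comm, hm12]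
  have q5 : Dᴴ ^ 2 * D = (-Complex.I * ζ) • Λ ^ 3 := by
    rw [hDH2, hD, smul_mul_smul_comm, hm21]
  have q6 : Dᴴ ^ 2 * Dᴴ = Dᴴ ^ 3 := (pow_succ Dᴴ 2).symm
  have q7 : D ^ 2 * D = D ^ 3 := (pow_succ D 2).symm
  have q8 : D ^ 2 * Dᴴ = (Complex.I * starRingEnd ℂ ζ) • Λ ^ 3 := by
    rw [hD2, hDH, smul_mul_smul_comm, hm21]
  -- block frames
  set A := Matrix.fromRows (Matrix.fromCols R R)
      (Matrix.fromCols (R * D ^ 2) (R * (Dᴴ) ^ 2)) with hA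
  set B := Matrix.fromRows (Matrix.fromCols (R * D ^ 3) (R * (Dᴴ) ^ 3))
      (Matrix.fromCols (R * D) (R * Dᴴ)) with hB
  have hXm' : Xm = Matrix.fromRows A B := hXm
  have hXp' : Xp = Matrix.fromRows A (-B) := by
    rw [hXp, hA, hB]
    simp [Matrix.fromBlocks_neg]
  have hAB : Aᴴ * B =
      Matrix.fromBlocks (D ^ 3 + Dᴴ ^ 2 * D) (Dᴴ ^ 3 + Dᴴ ^ 2 * Dᴴ)
        (D ^ 3 + D ^ 2 * D) (Dᴴ ^ 3 + D ^ 2 * Dᴴ) := by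
    have hC1 : Matrix.fromCols R R = Matrix.fromCols (R * 1) (R * 1) := by
      rw [Matrix.mul_one]
    rw [hA, hB, Matrix.conjTranspose_fromRows_eq_fromCols_conjTranspose,
      Matrix.fromCols_mul_fromRows, hC1, stmt14_auxC R hR, stmt14_auxC R hR,
      Matrix.fromBlocks_add]
    simp [Matrix.conjTranspose_pow]
  have hBA : Bᴴ * A =
      Matrix.fromBlocks (Dᴴ ^ 3 + Dᴴ * D ^ 2) (Dᴴ ^ 3 + Dᴴ * Dᴴ ^ 2)
        (D ^ 3 + D * D ^ 2) (D ^ 3 + D * Dᴴ ^ 2) := by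
    have hC1 : Matrix.fromCols R R = Matrix.fromCols (R * 1) (R * 1) := by
      rw [Matrix.mul_one]
    rw [hB, hA, Matrix.conjTranspose_fromRows_eq_fromCols_conjTranspose,
      Matrix.fromCols_mul_fromRows, hC1, stmt14_auxC R hR, stmt14_auxC R hR,
      Matrix.fromBlocks_add]
    simp [Matrix.conjTranspose_pow]
  -- block identities
  have bTL : (Dᴴ ^ 3 + Dᴴ * D ^ 2) + (D ^ 3 + Dᴴ ^ 2 * D) = 0 := by
    rw [q1, q5, hD3, hDH3]; module
  have bTR : (Dᴴ ^ 3 + Dᴴ * Dᴴ ^ 2) + (Dᴴ ^ 3 + Dᴴ ^ 2 * Dᴴ) = (4 : ℂ) • Dᴴ ^ 3 := by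
    rw [q2, q6]; module
  have bBL : (D ^ 3 + D * D ^ 2) + (D ^ 3 + D ^ 2 * D) = (4 : ℂ) • D ^ 3 := by
    rw [q3, q7]; module
  have bBR : (D ^ 3 + D * Dᴴ ^ 2) + (Dᴴ ^ 3 + D ^ 2 * Dᴴ) = 0 := by
    rw [q4, q8, hD3, hDH3]; module
  have dTL : (Dᴴ ^ 3 + Dᴴ * D ^ 2) - (D ^ 3 + Dᴴ ^ 2 * D) = 0 := by
    rw [q1, q5, hD3, hDH3]; module
  have dTR : (Dᴴ ^ 3 + Dᴴ * Dᴴ ^ 2) - (Dᴴ ^ 3 + Dᴴ ^ 2 * Dᴴ) = 0 := by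
    rw [q2, q6]; module
  have dBL : (D ^ 3 + D * D ^ 2) - (D ^ 3 + D ^ 2 * D) = 0 := by
    rw [q3, q7]; module
  have dBR : (D ^ 3 + D * Dᴴ ^ 2) - (Dᴴ ^ 3 + D ^ 2 * Dᴴ) = 0 := by
    rw [q4, q8, hD3, hDH3]; module
  have hSum : Bᴴ * A + Aᴴ * B =
      Matrix.fromBlocks 0 ((4 : ℂ) • (Dᴴ) ^ 3) ((4 : ℂ) • D ^ 3) 0 := by
    rw [hAB, hBA, Matrix.fromBlocks_add, bTL, bTR, bBL, bBR]
  have hDiff : Bᴴ * A - Aᴴ * B = 0 := by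
    rw [hAB, hBA, sub_eq_add_neg, Matrix.fromBlocks_neg, Matrix.fromBlocks_add,
      ← sub_eq_add_neg, ← sub_eq_add_neg, ← sub_eq_add_neg, ← sub_eq_add_neg,
      dTL, dTR, dBL, dBR, Matrix.fromBlocks_zero]
  -- key product
  have hK : Xmᴴ * J * Xp = Matrix.fromBlocks 0 ((4 : ℂ) • (Dᴴ) ^ 3) ((4 : ℂ) • D ^ 3) 0 := by
    rw [hXm', hXp', hJ, stmt14_auxJ, Matrix.mul_neg, sub_neg_eq_add, hSum]
  have hKm : Xmᴴ * J * Xm = 0 := by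
    rw [hXm', hJ, stmt14_auxJ, hDiff]
  -- invertibility
  have hζ0 : ζ ≠ 0 := by
    intro h
    apply Complex.I_ne_zero
    rw [← hz2, h]
    ring
  have hli : ∀ i, (l i : ℂ) ≠ 0 := fun i =>
    Complex.ofReal_ne_zero.mpr (ne_of_gt (hl i))
  have hsz0 : (starRingEnd ℂ ζ) ≠ 0 := by
    simpa using hζ0
  have hD3diag : (4 : ℂ) • D ^ 3
      = Matrix.diagonal (fun i => 4 * (Complex.I * ζ) * (l i : ℂ) ^ 3) := by
    rw [hD3, smul_smul, hΛ, Matrix.diagonal_pow, ← Matrix.diagonal_smul]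
    have he : (4 * (Complex.I * ζ)) • ((fun i : Fin n => ((l i : ℂ))) ^ 3)
        = fun i : Fin n => 4 * (Complex.I * ζ) * (l i : ℂ) ^ 3 := by
      funext i
      simp [mul_assoc]
    rw [he]
  have hDH3diag : (4 : ℂ) • Dᴴ ^ 3 =
      Matrix.diagonal (fun i => 4 * (-Complex.I * starRingEnd ℂ ζ) * (l i : ℂ) ^ 3) := by
    rw [hDH3, smul_smul, hΛ, Matrix.diagonal_pow, ← Matrix.diagonal_smul]
    have he : (4 * (-Complex.I * starRingEnd ℂ ζ)) • ((fun i : Fin n => ((l i : ℂ))) ^ 3)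
        = fun i : Fin n => 4 * (-Complex.I * starRingEnd ℂ ζ) * (l i : ℂ) ^ 3 := by
      funext i
      simp [mul_assoc]
    rw [he]
  set K' : Matrix (Fin n ⊕ Fin n) (Fin n ⊕ Fin n) ℂ :=
    Matrix.fromBlocks 0 (Matrix.diagonal fun i => (4 * (Complex.I * ζ) * (l i : ℂ) ^ 3)⁻¹)
      (Matrix.diagonal fun i => (4 * (-Complex.I * starRingEnd ℂ ζ) * (l i : ℂ) ^ 3)⁻¹) 0
    with hK'def
  have hinv1 : ∀ i : Fin n, (4 * (Complex.I * ζ) * (l i : ℂ) ^ 3) ≠ 0 := fun i =>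
    mul_ne_zero (mul_ne_zero (by norm_num) (mul_ne_zero Complex.I_ne_zero hζ0))
      (pow_ne_zero _ (hli i))
  have hinv2 : ∀ i : Fin n, (4 * (-Complex.I * starRingEnd ℂ ζ) * (l i : ℂ) ^ 3) ≠ 0 := fun i =>
    mul_ne_zero (mul_ne_zero (by norm_num)
      (mul_ne_zero (neg_ne_zero.mpr Complex.I_ne_zero) hsz0)) (pow_ne_zero _ (hli i))
  have ddiag : ∀ (f : Fin n → ℂ), (∀ i, f i ≠ 0) →
      Matrix.diagonal f * Matrix.diagonal (fun i => (f i)⁻¹) = 1 := by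
    intro f hf
    rw [Matrix.diagonal_mul_diagonal]
    have hfe : (fun i => f i * (f i)⁻¹) = fun _ : Fin n => (1 : ℂ) := by
      funext i
      exact mul_inv_cancel₀ (hf i)
    rw [hfe]
    exact Matrix.diagonal_one
  have hKK' : (Matrix.fromBlocks 0 ((4 : ℂ) • (Dᴴ) ^ 3) ((4 : ℂ) • D ^ 3) 0) * K' = 1 := by
    rw [hK'def, Matrix.fromBlocks_multiply, hD3diag, hDH3diag]
    simp only [Matrix.zero_mul, Matrix.mul_zero, zero_add, add_zero]
    rw [ddiag _ hinv2, ddiag _ hinv1, Matrix.fromBlocks_one]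
  have hK'K : K' * (Matrix.fromBlocks 0 ((4 : ℂ) • (Dᴴ) ^ 3) ((4 : ℂ) • D ^ 3) 0) = 1 :=
    mul_eq_one_comm.mp hKK'
  have hUnit : IsUnit (Xmᴴ * J * Xp) := by
    rw [hK]
    exact ⟨⟨Matrix.fromBlocks 0 ((4 : ℂ) • (Dᴴ) ^ 3) ((4 : ℂ) • D ^ 3) 0, K', hKK', hK'K⟩, rfl⟩
  refine ⟨hK, hUnit, ?_⟩
  -- trivial intersection
  rw [eq_bot_iff]
  rintro x ⟨hx1, hx2⟩
  obtain ⟨u, hu⟩ := hx1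
  obtain ⟨v, hv⟩ := hx2
  rw [Matrix.mulVecLin_apply] at hu hv
  have hKv : (Matrix.fromBlocks 0 ((4 : ℂ) • (Dᴴ) ^ 3) ((4 : ℂ) • D ^ 3) 0) *ᵥ v = 0 := by
    rw [← hK, ← Matrix.mulVec_mulVec, hv, ← hu, Matrix.mulVec_mulVec, hKm,
      Matrix.zero_mulVec]
  have hv0 : v = 0 := by
    calc v = 1 *ᵥ v := (Matrix.one_mulVec v).symm
    _ = K' *ᵥ ((Matrix.fromBlocks 0 ((4 : ℂ) • (Dᴴ) ^ 3) ((4 : ℂ) • D ^ 3) 0) *ᵥ v) := by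
        rw [Matrix.mulVec_mulVec, hK'K]
    _ = 0 := by rw [hKv, Matrix.mulVec_zero]
  simp only [Submodule.mem_bot]
  rw [← hv, hv0, Matrix.mulVec_zero]
end
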